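/- Let Ω be a set and f, g : Ω → Ω injective maps with equivalent cycle decompositions. Then there exists a permutation a of Ω such that g = a∘f∘a⁻¹. -/

import Mathlib

universe u

def IsCycle {Ω : Type u} (f : Ω → Ω) (S : Set Ω) : Prop :=
  S.Nonempty ∧ (∀ γ, f γ ∈ S ↔ γ ∈ S) ∧
    ∀ T, T ⊆ S → T.Nonempty → (∀ γ, f γ ∈ T ↔ γ ∈ T) → T = S

def IsForwardCycle {Ω : Type u} (f : Ω → Ω) (S : Set Ω) : Prop :=
  IsCycle f S ∧ S.Infinite ∧ ∃ α ∈ S, α ∉ Set.range f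

def IsOpenCycle {Ω : Type u} (f : Ω → Ω) (S : Set Ω) : Prop :=
  IsCycle f S ∧ S.Infinite ∧ ¬ IsForwardCycle f S

def EquivCycleDecomp {Ω Ω' : Type u} (f : Ω → Ω) (g : Ω' → Ω') : Prop :=
  ∃ (I : Type u) (S : I → Set Ω) (T : I → Set Ω'),
    (∀ i, IsCycle f (S i)) ∧ (∀ i, IsCycle g (T i)) ∧
    (∀ α : Ω, ∃! i, α ∈ S i) ∧ (∀ β : Ω', ∃! i, β ∈ T i) ∧
    (∀ i, Cardinal.mk ↥(S i) = Cardinal.mk ↥(T i)) ∧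
    (∀ i, Cardinal.mk ↥(S i) = Cardinal.aleph0 →
      (IsForwardCycle f (S i) ↔ IsForwardCycle g (T i)))

-- generic pairing
lemma pair_equiv {Ω : Type u} {f g : Ω → Ω} {S T : Set Ω} {ι : Type}
    (next : ι → ι) (eS : ι → S) (eT : ι → T)
    (hSsurj : Function.Surjective eS) (hTsurj : Function.Surjective eT)
    (hiff : ∀ i j, eS i = eS j ↔ eT i = eT j)
    (hmem : ∀ x : S, f ↑x ∈ S)
    (hSstep : ∀ i, ((eS (next i)) : Ω) = f (eS i))
    (hTstep : ∀ i, ((eT (next i)) : Ω) = g (eT i)) :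
    ∃ φ : S ≃ T, ∀ x : S, ((φ ⟨f ↑x, hmem x⟩ : Ω) = g (φ x)) := by
  classical
  set φ : S → T := fun x => eT (hSsurj x).choose with hφdef
  set ψ : T → S := fun y => eS (hTsurj y).choose with hψdef
  have hφ : ∀ i, φ (eS i) = eT i := by
    intro i
    have h1 : eS ((hSsurj (eS i)).choose) = eS i := (hSsurj (eS i)).choose_spec
    exact (hiff _ _).mp h1
  have hψ : ∀ i, ψ (eT i) = eS i := by
    intro i
    have h1 : eT ((hTsurj (eT i)).choose) = eT i := (hTsurj (eT i)).choose_spec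
    exact (hiff _ _).mpr h1
  have hli : Function.LeftInverse ψ φ := by
    intro x
    obtain ⟨i, rfl⟩ := hSsurj x
    rw [hφ, hψ]
  have hri : Function.RightInverse ψ φ := by
    intro y
    obtain ⟨i, rfl⟩ := hTsurj y
    rw [hψ, hφ]
  refine ⟨⟨φ, ψ, hli, hri⟩, ?_⟩
  intro x
  obtain ⟨i, rfl⟩ := hSsurj x
  have h1 : (⟨f ↑(eS i), hmem (eS i)⟩ : S) = eS (next i) := by
    exact Subtype.ext (hSstep i).symm
  show (φ _ : Ω) = g (φ (eS i))
  rw [h1, hφ, hφ, hTstep]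

lemma forward_struct {Ω : Type u} {f : Ω → Ω} (hf : Function.Injective f) {S : Set Ω}
    (hS : IsCycle f S) (hfw : IsForwardCycle f S) :
    ∃ e : ℕ → S, Function.Bijective e ∧ ∀ n, ((e (n+1)) : Ω) = f (e n) := by
  obtain ⟨-, -, α, hα, hαr⟩ := hfw
  have hmemN : ∀ n : ℕ, f^[n] α ∈ S := by
    intro n
    induction n with
    | zero => exact hα
    | succ n ih => rw [Function.iterate_succ_apply']; exact (hS.2.1 _).mpr ih
  refine ⟨fun n => ⟨f^[n] α, hmemN n⟩, ⟨?_, ?_⟩, ?_⟩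
  · -- injective
    intro i j hij
    simp only [Subtype.mk.injEq] at hij
    by_contra hne
    wlog hlt : i < j generalizing i j
    · exact this hij.symm (Ne.symm hne) (by omega)
    obtain ⟨d, rfl⟩ : ∃ d, j = i + (d + 1) := ⟨j - i - 1, by omega⟩
    rw [Function.iterate_add_apply] at hij
    have h2 : α = f^[d+1] α := (hf.iterate i) hij
    rw [Function.iterate_succ_apply'] at h2
    exact hαr ⟨_, h2.symm⟩
  · -- surjective
    have hU : {x | ∃ n : ℕ, x = f^[n] α} = S := by
      apply hS.2.2
      · rintro x ⟨n, rfl⟩; exact hmemN n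
      · exact ⟨α, 0, rfl⟩
      · intro γ
        constructor
        · rintro ⟨n, hn⟩
          cases n with
          | zero => exact absurd (⟨γ, by simpa using hn⟩ : α ∈ Set.range f) hαr
          | succ m =>
            rw [Function.iterate_succ_apply'] at hn
            exact ⟨m, hf hn⟩
        · rintro ⟨n, rfl⟩
          exact ⟨n + 1, (Function.iterate_succ_apply' f n α).symm⟩
    rintro ⟨x, hx⟩
    rw [← hU] at hx
    obtain ⟨n, rfl⟩ := hx
    exact ⟨n, rfl⟩
  · intro n
    exact Function.iterate_succ_apply' f n α

lemma zcase_struct {Ω : Type u} {f : Ω → Ω} (hf : Function.Injective f) {S : Set Ω}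
    (hS : IsCycle f S) (hcase : S.Finite ∨ (S.Infinite ∧ ¬ IsForwardCycle f S)) :
    ∃ e : ℤ → S, Function.Surjective e ∧
      (∀ i j, e i = e j ↔ (Nat.card S : ℤ) ∣ j - i) ∧
      ∀ n, ((e (n+1)) : Ω) = f (e n) := by
  classical
  set fS : S → S := fun x => ⟨f ↑x, (hS.2.1 ↑x).mpr x.2⟩ with hfSdef
  have hfSinj : Function.Injective fS := by
    intro x y hxy
    exact Subtype.ext (hf (congrArg Subtype.val hxy))
  have hfSbij : Function.Bijective fS := by
    rcases hcase with hfin | ⟨hinf, hnfw⟩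
    · haveI : Finite ↥S := hfin.to_subtype
      exact (Finite.injective_iff_bijective).mp hfSinj
    · refine ⟨hfSinj, ?_⟩
      rintro ⟨y, hy⟩
      have hyr : y ∈ Set.range f := by
        by_contra hyr
        exact hnfw ⟨hS, hinf, y, hy, hyr⟩
      obtain ⟨x, hx⟩ := hyr
      have hxS : x ∈ S := (hS.2.1 x).mp (hx ▸ hy)
      exact ⟨⟨x, hxS⟩, Subtype.ext hx⟩
  set F : Equiv.Perm ↥S := Equiv.ofBijective fS hfSbij with hFdef
  have hFapp : ∀ x : ↥S, (↑(F x) : Ω) = f ↑x := fun x => rfl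
  obtain ⟨α, hα⟩ := hS.1
  set α₀ : ↥S := ⟨α, hα⟩ with hα₀def
  set e : ℤ → ↥S := fun n => (F ^ n) α₀ with hedef
  have hstep : ∀ n : ℤ, ((e (n+1)) : Ω) = f (e n) := by
    intro n
    have h1 : F ^ (n + 1) = F * F ^ n := by rw [add_comm, zpow_add, zpow_one]
    show ((F ^ (n+1)) α₀ : Ω) = f ↑((F ^ n) α₀)
    rw [h1, Equiv.Perm.mul_apply, hFapp]
  -- surjectivity
  have hsurj : Function.Surjective e := by
    have hU : {x | ∃ n : ℤ, x = ↑(e n)} = S := by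
      apply hS.2.2
      · rintro x ⟨n, rfl⟩; exact (e n).2
      · exact ⟨α, 0, by simp [hedef, hα₀def]⟩
      · intro γ
        constructor
        · rintro ⟨n, hn⟩
          refine ⟨n - 1, hf ?_⟩
          have h2 := hstep (n - 1)
          rw [sub_add_cancel] at h2
          rw [hn]
          exact h2
        · rintro ⟨n, rfl⟩
          exact ⟨n + 1, (hstep n).symm⟩
    rintro ⟨x, hx⟩
    rw [← hU] at hx
    obtain ⟨n, rfl⟩ := hx
    exact ⟨n, rfl⟩
  -- fixed point structure
  set fix : ℤ → Prop := fun d => (F ^ d) α₀ = α₀ with hfixdef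
  have hneg : ∀ d : ℤ, fix d → fix (-d) := by
    intro d hd
    apply (F ^ d).injective
    show (F ^ d) ((F ^ (-d)) α₀) = (F ^ d) α₀
    rw [← Equiv.Perm.mul_apply, ← zpow_add]
    have h0 : d + -d = 0 := by ring
    rw [h0, zpow_zero]
    simpa using hd.symm
  have hfix_mul : ∀ d : ℤ, fix d → ∀ k : ℤ, fix (d * k) := by
    intro d hd k
    show (F ^ (d * k)) α₀ = α₀
    rw [zpow_mul]
    exact (Function.IsFixedPt.perm_zpow hd k)
  have hshift : ∀ i j : ℤ, e i = e j ↔ fix (j - i) := by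
    intro i j
    have h1 : e j = (F ^ i) ((F ^ (j - i)) α₀) := by
      show (F ^ j) α₀ = _
      rw [← Equiv.Perm.mul_apply, ← zpow_add]
      congr 1
      ring_nf
    constructor
    · intro hij
      have h2 : (F ^ i) α₀ = (F ^ i) ((F ^ (j-i)) α₀) := by
        rw [← h1]; exact hij
      exact ((F ^ i).injective h2).symm
    · intro hd
      have h2 : (F ^ i) ((F ^ (j - i)) α₀) = (F ^ j) α₀ := h1.symm
      show (F ^ i) α₀ = (F ^ j) α₀
      rw [← h2, hd]
  have hfix_sub : ∀ d : ℤ, fix d → fix (d % (Nat.card ↥S : ℤ) - d) → True := fun _ _ _ => trivial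
  -- key dichotomy
  rcases hcase with hfin | ⟨hinf, -⟩
  · -- finite case
    haveI : Finite ↥S := hfin.to_subtype
    obtain ⟨i, j, hne, hij⟩ := Finite.exists_ne_map_eq_of_infinite e
    have hdpos : ∃ m : ℕ, 0 < m ∧ fix (m : ℤ) := by
      have hd : fix (j - i) := (hshift i j).mp hij
      rcases lt_or_gt_of_ne (sub_ne_zero.mpr (Ne.symm hne)) with hlt | hgt
      · refine ⟨(i - j).toNat, by omega, ?_⟩
        have h9 : ((i - j).toNat : ℤ) = -(j - i) := by omega
        rw [h9]
        exact hneg _ hd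
      · exact ⟨(j - i).toNat, by omega, by rwa [Int.toNat_of_nonneg (by omega)]⟩
    set p : ℕ := Nat.find hdpos with hpdef
    obtain ⟨hppos, hpfix⟩ := Nat.find_spec hdpos
    have hmin : ∀ m : ℕ, 0 < m → m < p → ¬ fix (m : ℤ) := by
      intro m hm hmp hfixm
      exact Nat.find_min hdpos hmp ⟨hm, hfixm⟩
    have hmod : ∀ n : ℤ, e n = e (n % p) := by
      intro n
      rw [hshift]
      have : n % p - n = (p : ℤ) * (-(n / p)) := by
        have := Int.emod_add_mul_ediv n p
        ring_nf
        omega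
      rw [this]
      exact hfix_mul _ hpfix _
    have hinj_ico : ∀ i j : ℤ, 0 ≤ i → i < p → 0 ≤ j → j < p → e i = e j → i = j := by
      intro i j hi hip hj hjp hij
      by_contra hne
      wlog hlt : i < j generalizing i j
      · exact this j i hj hjp hi hip hij.symm (Ne.symm hne) (by omega)
      have hd : fix (j - i) := (hshift i j).mp hij
      have : fix ((j - i).toNat : ℤ) := by rwa [Int.toNat_of_nonneg (by omega)]
      exact hmin (j - i).toNat (by omega) (by omega) this
    -- Nat.card S = p
    have hcardp : Nat.card ↥S = p := by
      have hbij : Function.Bijective (fun k : Fin p => e k) := by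
        constructor
        · intro k l hkl
          have := hinj_ico k l (by positivity) (by exact_mod_cast k.2) (by positivity)
            (by exact_mod_cast l.2) hkl
          exact Fin.ext (by exact_mod_cast this)
        · intro x
          obtain ⟨n, rfl⟩ := hsurj x
          have h1 : 0 ≤ n % p := Int.emod_nonneg n (by exact_mod_cast hppos.ne')
          have h2 : n % p < p := Int.emod_lt_of_pos n (by exact_mod_cast hppos)
          refine ⟨⟨(n % p).toNat, by omega⟩, ?_⟩
          show e (((n % (p:ℤ)).toNat : ℕ) : ℤ) = e n
          rw [Int.toNat_of_nonneg h1]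
          exact (hmod n).symm
      calc Nat.card ↥S = Nat.card (Fin p) := (Nat.card_eq_of_bijective _ hbij).symm
        _ = p := Nat.card_eq_fintype_card.trans (Fintype.card_fin p)
      
    refine ⟨e, hsurj, ?_, hstep⟩
    intro i j
    rw [hshift, hcardp]
    constructor
    · intro hd
      have h1 : fix ((j - i) % p) := by
        have heq : (j - i) % p = (j - i) + (p : ℤ) * (-( (j-i) / p)) := by
          have := Int.emod_add_mul_ediv (j - i) p
          ring_nf
          omega
        rw [heq]
        -- fix (a) and fix (p * k) imply fix (a + p*k)
        show (F ^ ((j-i) + (p:ℤ) * (-((j-i)/p)))) α₀ = α₀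
        rw [zpow_add, Equiv.Perm.mul_apply]
        have h2 : ((F ^ ((p:ℤ) * (-((j-i)/p)))) α₀) = α₀ := hfix_mul _ hpfix _
        rw [h2]
        exact hd
      have h3 : 0 ≤ (j - i) % p := Int.emod_nonneg _ (by exact_mod_cast hppos.ne')
      have h4 : (j - i) % p < p := Int.emod_lt_of_pos _ (by exact_mod_cast hppos)
      by_contra hndvd
      have h5 : 0 < (j - i) % p := by
        rcases h3.lt_or_eq with h | h
        · exact h
        · exact absurd (Int.dvd_of_emod_eq_zero h.symm) hndvd
      have : fix (((j - i) % p).toNat : ℤ) := by rwa [Int.toNat_of_nonneg h3]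
      exact hmin _ (by omega) (by omega) this
    · rintro ⟨k, hk⟩
      rw [hk]
      exact hfix_mul _ hpfix k
  · -- infinite case
    haveI : Infinite ↥S := hinf.to_subtype
    have hcard0 : Nat.card ↥S = 0 := Nat.card_eq_zero_of_infinite
    have hfix0 : ∀ d : ℤ, fix d → d = 0 := by
      intro d hd
      by_contra hd0
      -- S would be finite
      have habs : fix |d| := by
        rcases abs_choice d with h | h
        · rwa [h]
        · rw [h]
          exact hneg _ hd
      have hdpos : 0 < |d| := abs_pos.mpr hd0
      have hSfin : S.Finite := by
        have hsub : S ⊆ (fun n : ℤ => (↑(e n) : Ω)) '' (Set.Ico 0 |d|) := by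
          intro x hx
          obtain ⟨n, hn⟩ := hsurj ⟨x, hx⟩
          refine ⟨n % |d|, ⟨Int.emod_nonneg n hdpos.ne', Int.emod_lt_of_pos n hdpos⟩, ?_⟩
          have : e (n % |d|) = e n := by
            rw [hshift]
            have heq : n - n % |d| = |d| * (n / |d|) := by
              have := Int.emod_add_mul_ediv n |d|
              omega
            rw [heq]
            exact hfix_mul _ habs _
          show (↑(e (n % |d|)) : Ω) = x
          rw [this, hn]
        exact Set.Finite.subset (Set.Finite.image _ (Set.finite_Ico 0 |d|)) hsub
      exact hinf hSfin
    refine ⟨e, hsurj, ?_, hstep⟩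
    intro i j
    rw [hshift, hcard0]
    simp only [Nat.cast_zero, zero_dvd_iff]
    constructor
    · intro hd; exact hfix0 _ hd
    · intro hd; rw [hd]; show (F ^ (0:ℤ)) α₀ = α₀; simp
-- per-pair lemma, to be appended after a,b,c content
lemma cycle_card_aleph0 {Ω : Type u} {f : Ω → Ω} (hf : Function.Injective f) {S : Set Ω}
    (hS : IsCycle f S) (hinf : S.Infinite) : Cardinal.mk ↥S = Cardinal.aleph0 := by
  haveI : Infinite ↥S := hinf.to_subtype
  haveI : Countable ↥S := by
    by_cases hfw : IsForwardCycle f S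
    · obtain ⟨e, hbij, -⟩ := forward_struct hf hS hfw
      exact Countable.of_equiv ℕ (Equiv.ofBijective e hbij)
    · obtain ⟨e, hsurj, -, -⟩ := zcase_struct hf hS (Or.inr ⟨hinf, hfw⟩)
      exact hsurj.countable
  exact Cardinal.mk_eq_aleph0 ↥S

lemma cycle_pair {Ω : Type u} {f g : Ω → Ω} (hf : Function.Injective f)
    (hg : Function.Injective g) {S T : Set Ω} (hS : IsCycle f S) (hT : IsCycle g T)
    (hcard : Cardinal.mk ↥S = Cardinal.mk ↥T)
    (hfor : Cardinal.mk ↥S = Cardinal.aleph0 → (IsForwardCycle f S ↔ IsForwardCycle g T)) :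
    ∃ φ : S ≃ T, ∀ x : S, ((φ ⟨f ↑x, (hS.2.1 ↑x).mpr x.2⟩ : Ω) = g (φ x)) := by
  have hmem : ∀ x : S, f ↑x ∈ S := fun x => (hS.2.1 ↑x).mpr x.2
  have hnatcard : Nat.card ↥S = Nat.card ↥T := by
    obtain ⟨eq⟩ := Cardinal.eq.mp hcard
    exact Nat.card_congr eq
  by_cases hfin : S.Finite
  · have hTfin : T.Finite := by
      rw [← Cardinal.lt_aleph0_iff_set_finite] at hfin ⊢
      rwa [← hcard]
    obtain ⟨eS, hSsurj, hSiff, hSstep⟩ := zcase_struct hf hS (Or.inl hfin)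
    obtain ⟨eT, hTsurj, hTiff, hTstep⟩ := zcase_struct hg hT (Or.inl hTfin)
    refine pair_equiv (· + 1) eS eT hSsurj hTsurj ?_ hmem hSstep hTstep
    intro i j
    rw [hSiff, hTiff, hnatcard]
  · have hSinf : S.Infinite := hfin
    have hTinf : T.Infinite := by
      by_contra hT'
      rw [Set.not_infinite] at hT'
      apply hfin
      rw [← Cardinal.lt_aleph0_iff_set_finite] at hT' ⊢
      rwa [hcard]
    have hℵ : Cardinal.mk ↥S = Cardinal.aleph0 := cycle_card_aleph0 hf hS hSinf
    by_cases hfw : IsForwardCycle f S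
    · have hTfw : IsForwardCycle g T := (hfor hℵ).mp hfw
      obtain ⟨eS, hSbij, hSstep⟩ := forward_struct hf hS hfw
      obtain ⟨eT, hTbij, hTstep⟩ := forward_struct hg hT hTfw
      refine pair_equiv (· + 1) eS eT hSbij.2 hTbij.2 ?_ hmem hSstep hTstep
      intro i j
      constructor
      · intro hij; rw [hSbij.1 hij]
      · intro hij; rw [hTbij.1 hij]
    · have hTfw : ¬ IsForwardCycle g T := fun hTfw => hfw ((hfor hℵ).mpr hTfw)
      obtain ⟨eS, hSsurj, hSiff, hSstep⟩ := zcase_struct hf hS (Or.inr ⟨hSinf, hfw⟩)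
      obtain ⟨eT, hTsurj, hTiff, hTstep⟩ := zcase_struct hg hT (Or.inr ⟨hTinf, hTfw⟩)
      refine pair_equiv (· + 1) eS eT hSsurj hTsurj ?_ hmem hSstep hTstep
      intro i j
      rw [hSiff, hTiff, hnatcard]

theorem stmt_8 {Ω : Type u} (f g : Ω → Ω) (hf : Function.Injective f)
    (hg : Function.Injective g) (h : EquivCycleDecomp f g) :
    ∃ a : Equiv.Perm Ω, g = ⇑a ∘ f ∘ ⇑a.symm := by
  classical
  obtain ⟨I, S, T, hScyc, hTcyc, hSpart, hTpart, hcard, hfor⟩ := h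
  have key : ∀ i, ∃ φ : S i ≃ T i,
      ∀ x : S i, ((φ ⟨f ↑x, ((hScyc i).2.1 ↑x).mpr x.2⟩ : Ω) = g (φ x)) :=
    fun i => cycle_pair hf hg (hScyc i) (hTcyc i) (hcard i) (hfor i)
  choose φ hφ using key
  set iS : Ω → I := fun x => (hSpart x).choose with hiSdef
  have hiS_mem : ∀ x, x ∈ S (iS x) := fun x => (hSpart x).choose_spec.1
  have hiS_eq : ∀ {x : Ω} {i : I}, x ∈ S i → iS x = i :=
    fun {x i} hx => ((hSpart x).choose_spec.2 i hx).symm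
  set a : Ω → Ω := fun x => ((φ (iS x)) ⟨x, hiS_mem x⟩ : Ω) with hadef
  have ha_eq : ∀ (i : I) (x : Ω) (hx : x ∈ S i), a x = ((φ i) ⟨x, hx⟩ : Ω) := by
    intro i x hx
    have he : iS x = i := hiS_eq hx
    subst he
    rfl
  have ha_memT : ∀ x, a x ∈ T (iS x) := fun x => ((φ (iS x)) ⟨x, hiS_mem x⟩).2
  have hainj : Function.Injective a := by
    intro x y hxy
    have hix : iS x = iS y := by
      have h1 : a x ∈ T (iS x) := ha_memT x
      have h2 : a x ∈ T (iS y) := hxy ▸ ha_memT y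
      obtain ⟨j, -, huniq⟩ := hTpart (a x)
      rw [huniq _ h1, huniq _ h2]
    rw [ha_eq (iS y) x (hix ▸ hiS_mem x), ha_eq (iS y) y (hiS_mem y)] at hxy
    have := (φ (iS y)).injective (Subtype.ext hxy)
    exact congrArg Subtype.val this
  have hasurj : Function.Surjective a := by
    intro β
    obtain ⟨j, hβ, -⟩ := hTpart β
    set x : Ω := ((φ j).symm ⟨β, hβ⟩ : Ω) with hxdef
    refine ⟨x, ?_⟩
    have hxS : x ∈ S j := ((φ j).symm ⟨β, hβ⟩).2
    rw [ha_eq j x hxS]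
    have : (⟨x, hxS⟩ : S j) = (φ j).symm ⟨β, hβ⟩ := Subtype.ext rfl
    rw [this, Equiv.apply_symm_apply]
  have haequi : ∀ x, a (f x) = g (a x) := by
    intro x
    have hx : x ∈ S (iS x) := hiS_mem x
    have hfx : f x ∈ S (iS x) := ((hScyc (iS x)).2.1 x).mpr hx
    rw [ha_eq (iS x) (f x) hfx, ha_eq (iS x) x hx]
    exact hφ (iS x) ⟨x, hx⟩
  refine ⟨Equiv.ofBijective a ⟨hainj, hasurj⟩, ?_⟩
  funext y
  have hy : a ((Equiv.ofBijective a ⟨hainj, hasurj⟩).symm y) = y :=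
    (Equiv.ofBijective a ⟨hainj, hasurj⟩).apply_symm_apply y
  show g y = a (f ((Equiv.ofBijective a ⟨hainj, hasurj⟩).symm y))
  rw [haequi, hy]
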